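/- Let k ≥ 3 and n ≥ 2k+1 be integers, and let G be an edge-colored graph on n vertices obtained from the complete graph K_n by deleting at most one edge. Suppose G has a rainbow representative subgraph H that is isomorphic to the disjoint union of a complete graph K_{2k−3}, a complete graph K_3, and n−2k isolated vertices. Then G contains a rainbow matching of size k. -/
import Mathlib

/-- `G` (with edge-coloring `c`) contains a rainbow matching of size `k`:
`k` pairwise vertex-disjoint edges of `G` with pairwise distinct colors. -/
def HasRainbowMatching {V α : Type*} (G : SimpleGraph V) (c : Sym2 V → α) (k : ℕ) : Prop :=
  ∃ M : Finset (Sym2 V), M.card = k ∧ ↑M ⊆ G.edgeSet ∧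
    (∀ e ∈ M, ∀ f ∈ M, e ≠ f → ∀ v : V, v ∈ e → v ∉ f) ∧
    Set.InjOn c ↑M

/-- `H` is a rainbow representative subgraph of the edge-colored graph `(G, c)`:
`H` is a (spanning) subgraph of `G`, its edges have pairwise distinct colors, and every
edge of `G` has the same color as some edge of `H` (one edge chosen per color class). -/
def IsRainbowRepresentative {V α : Type*} (G H : SimpleGraph V) (c : Sym2 V → α) : Prop :=
  H ≤ G ∧ Set.InjOn c H.edgeSet ∧ ∀ e ∈ G.edgeSet, ∃ f ∈ H.edgeSet, c e = c f

open Sym2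

section AuxLemmas
variable {V α : Type*}

lemma rm_one_missing [Finite V] (G : SimpleGraph V) (hG : Gᶜ.edgeSet.ncard ≤ 1)
    {u v u' v' : V} (h1 : u ≠ v) (h2 : u' ≠ v')
    (hne : s(u,v) ≠ s(u',v')) (h : s(u,v) ∉ G.edgeSet) : s(u',v') ∈ G.edgeSet := by
  by_contra h'
  have e1 : s(u,v) ∈ Gᶜ.edgeSet := by
    rw [SimpleGraph.mem_edgeSet] at h ⊢
    exact (SimpleGraph.compl_adj G u v).mpr ⟨h1, h⟩
  have e2 : s(u',v') ∈ Gᶜ.edgeSet := by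
    rw [SimpleGraph.mem_edgeSet] at h' ⊢
    exact (SimpleGraph.compl_adj G u' v').mpr ⟨h2, h'⟩
  have : 1 < Gᶜ.edgeSet.ncard :=
    (Set.one_lt_ncard_iff (Set.toFinite _)).mpr ⟨_, _, e1, e2, hne⟩
  omega

lemma rm_disj_pair {a b p q : V} (h1 : a ≠ p) (h2 : a ≠ q) (h3 : b ≠ p) (h4 : b ≠ q) :
    ∀ v : V, v ∈ s(a,b) → v ∉ s(p,q) := by
  intro v hv hv'
  rw [Sym2.mem_iff] at hv hv'
  rcases hv with rfl | rfl <;> rcases hv' with rfl | rfl <;> simp_all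

lemma rm_pair_ne {a b p q : V} (h1 : a ≠ p) (h2 : a ≠ q) : s(a,b) ≠ s(p,q) := by
  intro h
  rw [Sym2.eq_iff] at h
  rcases h with ⟨rfl, rfl⟩ | ⟨rfl, rfl⟩ <;> simp_all

/-- `P` is a set of `t` pairwise disjoint pairs with vertices in `S`. -/
def RMPairing (P : Finset (Sym2 V)) (t : ℕ) (S : Finset V) : Prop :=
  P.card = t ∧ (∀ z ∈ P, ∃ u v, u ∈ S ∧ v ∈ S ∧ u ≠ v ∧ z = s(u,v)) ∧
    (∀ z ∈ P, ∀ z' ∈ P, z ≠ z' → ∀ v : V, v ∈ z → v ∉ z')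

lemma RMPairing.mono {P : Finset (Sym2 V)} {t : ℕ} {S S' : Finset V}
    (hSS : S ⊆ S') (h : RMPairing P t S) : RMPairing P t S' := by
  obtain ⟨h1, h2, h3⟩ := h
  refine ⟨h1, fun z hz => ?_, h3⟩
  obtain ⟨u, v, hu, hv, huv, rfl⟩ := h2 z hz
  exact ⟨u, v, hSS hu, hSS hv, huv, rfl⟩

lemma RMPairing.vmem {P : Finset (Sym2 V)} {t : ℕ} {S : Finset V}
    (h : RMPairing P t S) {z : Sym2 V} (hz : z ∈ P) {v : V} (hv : v ∈ z) : v ∈ S := by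
  obtain ⟨u, w, hu, hw, huw, rfl⟩ := h.2.1 z hz
  rw [Sym2.mem_iff] at hv
  rcases hv with rfl | rfl <;> assumption

lemma rm_pairs_base [DecidableEq V] :
    ∀ (t : ℕ) (S : Finset V), 2 * t ≤ S.card → ∃ P, RMPairing P t S := by
  intro t
  induction t with
  | zero => exact fun S _ => ⟨∅, by simp [RMPairing]⟩
  | succ t ih =>
    intro S hS
    have h2 : 1 < S.card := by omega
    obtain ⟨u, hu, v, hv, huv⟩ := Finset.one_lt_card.mp h2
    have hcard : 2 * t ≤ ((S.erase u).erase v).card := by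
      have := Finset.card_erase_of_mem hu
      have hv' : v ∈ S.erase u := Finset.mem_erase.mpr ⟨fun h => huv h.symm, hv⟩
      have := Finset.card_erase_of_mem hv'
      omega
    obtain ⟨P, hP⟩ := ih _ hcard
    refine ⟨insert s(u,v) P, ?_, ?_, ?_⟩
    · have : s(u,v) ∉ P := by
        intro hmem
        have := hP.vmem hmem (Sym2.mem_mk_left u v)
        simp [Finset.mem_erase] at this
      rw [Finset.card_insert_of_notMem this, hP.1]
    · intro z hz
      rcases Finset.mem_insert.mp hz with rfl | hz
      · exact ⟨u, v, hu, hv, huv, rfl⟩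
      · obtain ⟨a, b, ha, hb, hab, rfl⟩ := hP.2.1 z hz
        refine ⟨a, b, ?_, ?_, hab, rfl⟩
        · exact Finset.mem_of_mem_erase (Finset.mem_of_mem_erase ha)
        · exact Finset.mem_of_mem_erase (Finset.mem_of_mem_erase hb)
    · intro z hz z' hz' hne w hw hw'
      have key : ∀ y : V, y ∈ s(u,v) → ∀ z'' ∈ P, y ∉ z'' := by
        intro y hy z'' hz'' hmem
        have := hP.vmem hz'' hmem
        rw [Sym2.mem_iff] at hy
        rcases hy with rfl | rfl <;> simp [Finset.mem_erase] at this
      rcases Finset.mem_insert.mp hz with rfl | hz <;>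
        rcases Finset.mem_insert.mp hz' with rfl | hz'
      · exact hne rfl
      · exact key w hw z' hz' hw'
      · exact key w hw' z hz hw
      · exact hP.2.2 z hz z' hz' hne w hw hw'

lemma rm_pairs_avoid2 [DecidableEq V] (t : ℕ) (S : Finset V) (f : Sym2 V)
    (ht : 2 ≤ t) (hS : 2 * t ≤ S.card) : ∃ P, RMPairing P t S ∧ ∀ z ∈ P, z ≠ f := by
  induction f using Sym2.ind with
  | _ p q =>
    by_cases hpq : p ∈ S ∧ q ∈ S ∧ p ≠ q
    · obtain ⟨hp, hq, hpqne⟩ := hpq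
      have hw : ∃ w ∈ S, w ≠ p ∧ w ≠ q := by
        have h4 : 4 ≤ S.card := by omega
        have : (S \ {p, q}).card + ({p, q} : Finset V).card = (S ∪ {p,q}).card :=
          Finset.card_sdiff_add_card S {p,q}
        have hsub : S ⊆ S ∪ {p,q} := Finset.subset_union_left
        have hle : S.card ≤ (S ∪ {p,q}).card := Finset.card_le_card hsub
        have hc2 : ({p, q} : Finset V).card ≤ 2 := Finset.card_insert_le _ _ |>.trans (by simp)
        have : 0 < (S \ {p, q}).card := by omega
        obtain ⟨w, hw⟩ := Finset.card_pos.mp this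
        rw [Finset.mem_sdiff, Finset.mem_insert, Finset.mem_singleton] at hw
        push_neg at hw
        exact ⟨w, hw.1, hw.2.1, hw.2.2⟩
      obtain ⟨w, hwS, hwp, hwq⟩ := hw
      have hcard : 2 * (t - 1) ≤ ((S.erase p).erase w).card := by
        have := Finset.card_erase_of_mem hp
        have hw' : w ∈ S.erase p := Finset.mem_erase.mpr ⟨hwp, hwS⟩
        have := Finset.card_erase_of_mem hw'
        omega
      obtain ⟨P, hP⟩ := rm_pairs_base (t-1) _ hcard
      have hnotp : ∀ z ∈ P, ∀ v : V, v ∈ z → v ≠ p ∧ v ≠ w := by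
        intro z hz v hv
        have := hP.vmem hz hv
        simp [Finset.mem_erase] at this
        exact ⟨this.2.1, this.1⟩
      have hnew : s(p,w) ∉ P := fun hmem =>
        ((hnotp _ hmem p (Sym2.mem_mk_left p w)).1) rfl
      refine ⟨insert s(p,w) P, ⟨?_, ?_, ?_⟩, ?_⟩
      · rw [Finset.card_insert_of_notMem hnew, hP.1]; omega
      · intro z hz
        rcases Finset.mem_insert.mp hz with rfl | hz
        · exact ⟨p, w, hp, hwS, fun h => hwp h.symm, rfl⟩
        · obtain ⟨a, b, ha, hb, hab, rfl⟩ := hP.2.1 z hz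
          exact ⟨a, b, Finset.mem_of_mem_erase (Finset.mem_of_mem_erase ha),
            Finset.mem_of_mem_erase (Finset.mem_of_mem_erase hb), hab, rfl⟩
      · intro z hz z' hz' hne v hv hv'
        have key : ∀ y : V, y ∈ s(p,w) → ∀ z'' ∈ P, y ∉ z'' := by
          intro y hy z'' hz'' hmem
          rw [Sym2.mem_iff] at hy
          rcases hy with rfl | rfl
          · exact (hnotp _ hz'' y hmem).1 rfl
          · exact (hnotp _ hz'' y hmem).2 rfl
        rcases Finset.mem_insert.mp hz with rfl | hz <;>
          rcases Finset.mem_insert.mp hz' with rfl | hz'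
        · exact hne rfl
        · exact key v hv z' hz' hv'
        · exact key v hv' z hz hv
        · exact hP.2.2 z hz z' hz' hne v hv hv'
      · intro z hz hzf
        rcases Finset.mem_insert.mp hz with rfl | hz
        · rw [Sym2.eq_iff] at hzf
          rcases hzf with ⟨h1, h2⟩ | ⟨h1, h2⟩
          · exact hwq h2
          · exact hpqne h1
        · subst hzf
          exact (hnotp _ hz p (Sym2.mem_mk_left p q)).1 rfl
    · obtain ⟨P, hP⟩ := rm_pairs_base t S hS
      refine ⟨P, hP, fun z hz hzf => ?_⟩
      obtain ⟨a, b, ha, hb, hab, rfl⟩ := hP.2.1 z hz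
      rw [Sym2.eq_iff] at hzf
      push_neg at hpq
      rcases hzf with ⟨h1, h2⟩ | ⟨h1, h2⟩
      · subst h1; subst h2; have := hpq ha hb; exact hab this
      · subst h1; subst h2; have := hpq hb ha; exact hab this.symm

/-- assemble a rainbow matching from one extra edge `e` (twin `f`) and a set `Q` of H-edges. -/
lemma rm_one_extra [DecidableEq V] {G H : SimpleGraph V} {c : Sym2 V → α} {k : ℕ}
    (hrep : IsRainbowRepresentative G H c)
    (e f : Sym2 V) (Q : Finset (Sym2 V))
    (he : e ∈ G.edgeSet) (hf : f ∈ H.edgeSet) (hc : c e = c f)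
    (hQH : ∀ z ∈ Q, z ∈ H.edgeSet) (hfQ : ∀ z ∈ Q, z ≠ f)
    (hdisjeQ : ∀ z ∈ Q, ∀ v : V, v ∈ e → v ∉ z)
    (hdisjQ : ∀ z ∈ Q, ∀ z' ∈ Q, z ≠ z' → ∀ v : V, v ∈ z → v ∉ z')
    (hcard : Q.card + 1 = k) :
    HasRainbowMatching G c k := by
  have heQ : e ∉ Q := by
    intro hmem
    induction e using Sym2.ind with
    | _ u v => exact hdisjeQ _ hmem u (Sym2.mem_mk_left u v) (Sym2.mem_mk_left u v)
  refine ⟨insert e Q, ?_, ?_, ?_, ?_⟩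
  · rw [Finset.card_insert_of_notMem heQ]; omega
  · intro z hz
    rcases Finset.mem_insert.mp (Finset.mem_coe.mp hz) with heq | hz
    · rw [heq]; exact he
    · exact (SimpleGraph.edgeSet_mono hrep.1) (hQH z hz)
  · intro z hz z' hz' hne v hv hv'
    rcases Finset.mem_insert.mp hz with heq | hz <;>
      rcases Finset.mem_insert.mp hz' with heq' | hz'
    · exact hne (heq.trans heq'.symm)
    · exact hdisjeQ z' hz' v (heq ▸ hv) hv'
    · exact hdisjeQ z hz v (heq' ▸ hv') hv
    · exact hdisjQ z hz z' hz' hne v hv hv'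
  · intro z hz z' hz' hcc
    rcases Finset.mem_insert.mp (Finset.mem_coe.mp hz) with heq | hz <;>
      rcases Finset.mem_insert.mp (Finset.mem_coe.mp hz') with heq' | hz'
    · rw [heq, heq']
    · exact absurd (hrep.2.1 hf (hQH z' hz') (by rw [← hc, ← heq, hcc])).symm (hfQ z' hz')
    · exact absurd (hrep.2.1 (hQH z hz) hf (by rw [hcc, heq', hc])) (hfQ z hz)
    · exact hrep.2.1 (hQH z hz) (hQH z' hz') hcc

/-- assemble a rainbow 3-matching from two extra edges and one H-edge. -/
lemma rm_two_extra [DecidableEq V] {G H : SimpleGraph V} {c : Sym2 V → α}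
    (hrep : IsRainbowRepresentative G H c)
    (e1 f1 e2 f2 h0 : Sym2 V)
    (he1 : e1 ∈ G.edgeSet) (hf1 : f1 ∈ H.edgeSet) (hc1 : c e1 = c f1)
    (he2 : e2 ∈ G.edgeSet) (hf2 : f2 ∈ H.edgeSet) (hc2 : c e2 = c f2)
    (hh : h0 ∈ H.edgeSet)
    (hf12 : f1 ≠ f2) (hf1h : f1 ≠ h0) (hf2h : f2 ≠ h0)
    (hd12 : ∀ v : V, v ∈ e1 → v ∉ e2)
    (hd1h : ∀ v : V, v ∈ e1 → v ∉ h0)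
    (hd2h : ∀ v : V, v ∈ e2 → v ∉ h0) :
    HasRainbowMatching G c 3 := by
  have hsym : ∀ (a b : Sym2 V), (∀ v : V, v ∈ a → v ∉ b) → a ≠ b := by
    intro a b hab hEq
    induction a using Sym2.ind with
    | _ u v => exact hab u (Sym2.mem_mk_left u v) (hEq ▸ Sym2.mem_mk_left u v)
  have h12 : e1 ≠ e2 := hsym _ _ hd12
  have h1h : e1 ≠ h0 := hsym _ _ hd1h
  have h2h : e2 ≠ h0 := hsym _ _ hd2h
  refine ⟨{e1, e2, h0}, ?_, ?_, ?_, ?_⟩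
  · rw [Finset.card_insert_of_notMem (by simp [h12, h1h]),
      Finset.card_insert_of_notMem (by simp [h2h]), Finset.card_singleton]
  · intro z hz
    simp only [Finset.coe_insert, Set.mem_insert_iff, Finset.coe_singleton,
      Set.mem_singleton_iff] at hz
    rcases hz with heq | heq | heq <;> rw [heq]
    · exact he1
    · exact he2
    · exact (SimpleGraph.edgeSet_mono hrep.1) hh
  · intro z hz z' hz' hne v hv hv'
    simp only [Finset.mem_insert, Finset.mem_singleton] at hz hz'
    rcases hz with heq | heq | heq <;> rcases hz' with heq' | heq' | heq' <;>
      rw [heq] at hv <;> rw [heq'] at hv'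
    · exact hne (heq.trans heq'.symm)
    · exact hd12 v hv hv'
    · exact hd1h v hv hv'
    · exact hd12 v hv' hv
    · exact hne (heq.trans heq'.symm)
    · exact hd2h v hv hv'
    · exact hd1h v hv' hv
    · exact hd2h v hv' hv
    · exact hne (heq.trans heq'.symm)
  · intro z hz z' hz' hcc
    simp only [Finset.coe_insert, Set.mem_insert_iff, Finset.coe_singleton,
      Set.mem_singleton_iff] at hz hz'
    rcases hz with heq | heq | heq <;> rcases hz' with heq' | heq' | heq' <;>
      (try exact heq.trans heq'.symm) <;> rw [heq, heq'] at hcc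
    · exact absurd (hrep.2.1 hf1 hf2 (by rw [← hc1, ← hc2, hcc])) hf12
    · exact absurd (hrep.2.1 hf1 hh (by rw [← hc1, hcc])) hf1h
    · exact absurd (hrep.2.1 hf2 hf1 (by rw [← hc2, ← hc1, hcc])) hf12.symm
    · exact absurd (hrep.2.1 hf2 hh (by rw [← hc2, hcc])) hf2h
    · exact absurd (hrep.2.1 hh hf1 (by rw [hcc, hc1])) hf1h.symm
    · exact absurd (hrep.2.1 hh hf2 (by rw [hcc, hc2])) hf2h.symm

lemma rm_pair_ne_left {a b d : V} (h1 : b ≠ d) (h2 : a ≠ d) : s(a,b) ≠ s(a,d) := by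
  intro h
  rw [Sym2.eq_iff] at h
  rcases h with ⟨_, h⟩ | ⟨h, _⟩
  · exact h1 h
  · exact h2 h

lemma rm_good3 [DecidableEq V] {G H : SimpleGraph V} {c : Sym2 V → α}
    (hrep : IsRainbowRepresentative G H c)
    (e f h1 h2 h3 : Sym2 V)
    (he : e ∈ G.edgeSet) (hf : f ∈ H.edgeSet) (hc : c e = c f)
    (hh1 : h1 ∈ H.edgeSet) (hh2 : h2 ∈ H.edgeSet) (hh3 : h3 ∈ H.edgeSet)
    (hfh1 : f ≠ h1) (h23 : h2 ≠ h3)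
    (hde1 : ∀ v : V, v ∈ e → v ∉ h1)
    (hde2 : ∀ v : V, v ∈ e → v ∉ h2)
    (hde3 : ∀ v : V, v ∈ e → v ∉ h3)
    (hd12 : ∀ v : V, v ∈ h1 → v ∉ h2)
    (hd13 : ∀ v : V, v ∈ h1 → v ∉ h3) :
    HasRainbowMatching G c 3 := by
  have hsym : ∀ (a b : Sym2 V), (∀ v : V, v ∈ a → v ∉ b) → a ≠ b := by
    intro a b hab hEq
    induction a using Sym2.ind with
    | _ u v => exact hab u (Sym2.mem_mk_left u v) (hEq ▸ Sym2.mem_mk_left u v)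
  by_cases hfh2 : f = h2
  · refine rm_one_extra hrep e f {h1, h3} he hf hc ?_ ?_ ?_ ?_ ?_
    · intro z hz
      rcases Finset.mem_insert.mp hz with heq | hz
      · rw [heq]; exact hh1
      · rw [Finset.mem_singleton.mp hz]; exact hh3
    · intro z hz
      rcases Finset.mem_insert.mp hz with heq | hz
      · rw [heq]; exact fun hcon => hfh1 hcon.symm
      · rw [Finset.mem_singleton.mp hz]
        intro hcon; rw [hfh2] at hcon; exact h23 hcon.symm
    · intro z hz v hv
      rcases Finset.mem_insert.mp hz with heq | hz
      · rw [heq]; exact hde1 v hv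
      · rw [Finset.mem_singleton.mp hz]; exact hde3 v hv
    · intro z hz z' hz' hne v hv hv'
      rcases Finset.mem_insert.mp hz with heq | hz <;>
        rcases Finset.mem_insert.mp hz' with heq' | hz'
      · exact hne (heq.trans heq'.symm)
      · rw [Finset.mem_singleton.mp hz'] at hv'
        exact hd13 v (heq ▸ hv) hv'
      · rw [Finset.mem_singleton.mp hz] at hv
        exact hd13 v (heq' ▸ hv') hv
      · exact hne ((Finset.mem_singleton.mp hz).trans (Finset.mem_singleton.mp hz').symm)
    · rw [Finset.card_insert_of_notMem (by
        simp only [Finset.mem_singleton]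
        exact hsym _ _ hd13), Finset.card_singleton]
  · refine rm_one_extra hrep e f {h1, h2} he hf hc ?_ ?_ ?_ ?_ ?_
    · intro z hz
      rcases Finset.mem_insert.mp hz with heq | hz
      · rw [heq]; exact hh1
      · rw [Finset.mem_singleton.mp hz]; exact hh2
    · intro z hz
      rcases Finset.mem_insert.mp hz with heq | hz
      · rw [heq]; exact fun hcon => hfh1 hcon.symm
      · rw [Finset.mem_singleton.mp hz]; exact fun hcon => hfh2 hcon.symm
    · intro z hz v hv
      rcases Finset.mem_insert.mp hz with heq | hz
      · rw [heq]; exact hde1 v hv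
      · rw [Finset.mem_singleton.mp hz]; exact hde2 v hv
    · intro z hz z' hz' hne v hv hv'
      rcases Finset.mem_insert.mp hz with heq | hz <;>
        rcases Finset.mem_insert.mp hz' with heq' | hz'
      · exact hne (heq.trans heq'.symm)
      · rw [Finset.mem_singleton.mp hz'] at hv'
        exact hd12 v (heq ▸ hv) hv'
      · rw [Finset.mem_singleton.mp hz] at hv
        exact hd12 v (heq' ▸ hv') hv
      · exact hne ((Finset.mem_singleton.mp hz).trans (Finset.mem_singleton.mp hz').symm)
    · rw [Finset.card_insert_of_notMem (by
        simp only [Finset.mem_singleton]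
        exact hsym _ _ hd12), Finset.card_singleton]

lemma rm_mirOr [DecidableEq V] {G H : SimpleGraph V} {c : Sym2 V → α}
    (hrep : IsRainbowRepresentative G H c)
    (x v : V) (o h2 h3 : Sym2 V)
    (ho : o ∈ H.edgeSet) (hh2 : h2 ∈ H.edgeSet) (hh3 : h3 ∈ H.edgeSet)
    (h23 : h2 ≠ h3)
    (hdeo : ∀ w : V, w ∈ s(x,v) → w ∉ o)
    (hde2 : ∀ w : V, w ∈ s(x,v) → w ∉ h2)
    (hde3 : ∀ w : V, w ∈ s(x,v) → w ∉ h3)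
    (hdo2 : ∀ w : V, w ∈ o → w ∉ h2)
    (hdo3 : ∀ w : V, w ∈ o → w ∉ h3) :
    HasRainbowMatching G c 3 ∨ (s(x,v) ∈ G.edgeSet → c s(x,v) = c o) := by
  by_cases hp : s(x,v) ∈ G.edgeSet
  · obtain ⟨f, hfH, hcf⟩ := hrep.2.2 _ hp
    by_cases hfo : f = o
    · exact Or.inr (fun _ => by rw [hcf, hfo])
    · exact Or.inl (rm_good3 hrep _ f o h2 h3 hp hfH hcf ho hh2 hh3 hfo h23
        hdeo hde2 hde3 hdo2 hdo3)
  · exact Or.inr (fun h => absurd h hp)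

lemma rm_S4core [DecidableEq V] {G H : SimpleGraph V} {c : Sym2 V → α}
    (hrep : IsRainbowRepresentative G H c)
    (A B : Set V)
    (hH : ∀ u v : V, H.Adj u v ↔
      (u ∈ A ∧ v ∈ A ∧ u ≠ v) ∨ (u ∈ B ∧ v ∈ B ∧ u ≠ v))
    (hAB : Disjoint A B)
    (x a1 a2 a3 b1 b2 b3 : V)
    (hxA : x ∉ A) (hxB : x ∉ B)
    (ha1 : a1 ∈ A) (ha2 : a2 ∈ A) (ha3 : a3 ∈ A)
    (hb1 : b1 ∈ B) (hb2 : b2 ∈ B) (hb3 : b3 ∈ B)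
    (ha12 : a1 ≠ a2) (ha13 : a1 ≠ a3) (ha23 : a2 ≠ a3)
    (hb12 : b1 ≠ b2) (hb13 : b1 ≠ b3) (hb23 : b2 ≠ b3)
    (hcross : s(a1,b1) ∈ G.edgeSet)
    (hxa2 : s(x,a2) ∈ G.edgeSet) (hxa3 : s(x,a3) ∈ G.edgeSet)
    (hxb2 : s(x,b2) ∈ G.edgeSet)
    (hm2 : c s(x,a2) = c s(a1,a3)) (hm3 : c s(x,a3) = c s(a1,a2))
    (hmb2 : c s(x,b2) = c s(b1,b3)) :
    HasRainbowMatching G c 3 := by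
  have hAne : ∀ {a : V}, a ∈ A → ∀ {b : V}, b ∈ B → a ≠ b := by
    intro a haA b hbB h
    exact (Set.disjoint_left.mp hAB haA) (h ▸ hbB)
  have hxa : ∀ {a : V}, a ∈ A → x ≠ a := fun h hc => hxA (hc ▸ h)
  have hxb : ∀ {b : V}, b ∈ B → x ≠ b := fun h hc => hxB (hc ▸ h)
  have HEa12 : s(a1,a2) ∈ H.edgeSet := (SimpleGraph.mem_edgeSet H).mpr
    ((hH a1 a2).mpr (Or.inl ⟨ha1, ha2, ha12⟩))
  have HEa13 : s(a1,a3) ∈ H.edgeSet := (SimpleGraph.mem_edgeSet H).mpr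
    ((hH a1 a3).mpr (Or.inl ⟨ha1, ha3, ha13⟩))
  have HEa23 : s(a2,a3) ∈ H.edgeSet := (SimpleGraph.mem_edgeSet H).mpr
    ((hH a2 a3).mpr (Or.inl ⟨ha2, ha3, ha23⟩))
  have HEb13 : s(b1,b3) ∈ H.edgeSet := (SimpleGraph.mem_edgeSet H).mpr
    ((hH b1 b3).mpr (Or.inr ⟨hb1, hb3, hb13⟩))
  have HEb23 : s(b2,b3) ∈ H.edgeSet := (SimpleGraph.mem_edgeSet H).mpr
    ((hH b2 b3).mpr (Or.inr ⟨hb2, hb3, hb23⟩))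
  obtain ⟨g, hgH, hcg⟩ := hrep.2.2 _ hcross
  by_cases hgb : g = s(b2,b3)
  · -- use M2 : {x b2, a1 b1, a2 a3}
    refine rm_two_extra hrep s(x,b2) s(b1,b3) s(a1,b1) g s(a2,a3)
      hxb2 HEb13 hmb2 hcross hgH hcg HEa23 ?_ ?_ ?_ ?_ ?_ ?_
    · rw [hgb]; exact rm_pair_ne hb12 hb13
    · exact rm_pair_ne (hAne ha2 hb1).symm (hAne ha3 hb1).symm
    · rw [hgb]; exact rm_pair_ne (hAne ha2 hb2).symm (hAne ha3 hb2).symm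
    · exact rm_disj_pair (hxa ha1) (hxb hb1) (hAne ha1 hb2).symm hb12.symm
    · exact rm_disj_pair (hxa ha2) (hxa ha3) (hAne ha2 hb2).symm (hAne ha3 hb2).symm
    · exact rm_disj_pair ha12 ha13 (hAne ha2 hb1).symm (hAne ha3 hb1).symm
  · by_cases hga : g = s(a1,a3)
    · -- use M1 with i = 3 : {x a3, a1 b1, b2 b3}
      refine rm_two_extra hrep s(x,a3) s(a1,a2) s(a1,b1) g s(b2,b3)
        hxa3 HEa12 hm3 hcross hgH hcg HEb23 ?_ ?_ hgb ?_ ?_ ?_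
      · rw [hga]; exact rm_pair_ne_left ha23 ha13
      · exact rm_pair_ne (hAne ha1 hb2) (hAne ha1 hb3)
      · exact rm_disj_pair (hxa ha1) (hxb hb1) ha13.symm (hAne ha3 hb1)
      · exact rm_disj_pair (hxb hb2) (hxb hb3) (hAne ha3 hb2) (hAne ha3 hb3)
      · exact rm_disj_pair (hAne ha1 hb2) (hAne ha1 hb3) hb12 hb13
    · -- use M1 with i = 2 : {x a2, a1 b1, b2 b3}
      refine rm_two_extra hrep s(x,a2) s(a1,a3) s(a1,b1) g s(b2,b3)
        hxa2 HEa13 hm2 hcross hgH hcg HEb23 (fun h => hga h.symm) ?_ hgb ?_ ?_ ?_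
      · exact rm_pair_ne (hAne ha1 hb2) (hAne ha1 hb3)
      · exact rm_disj_pair (hxa ha1) (hxb hb1) ha12.symm (hAne ha2 hb1)
      · exact rm_disj_pair (hxb hb2) (hxb hb3) (hAne ha2 hb2) (hAne ha2 hb3)
      · exact rm_disj_pair (hAne ha1 hb2) (hAne ha1 hb3) hb12 hb13

end AuxLemmas

theorem rainbow_matching_of_representative_K2km3_union_K3
    {V α : Type*} [Fintype V] (k n : ℕ) (hk : 3 ≤ k) (hn : 2 * k + 1 ≤ n)
    (hV : Fintype.card V = n)
    (G : SimpleGraph V) (hG : Gᶜ.edgeSet.ncard ≤ 1)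
    (H : SimpleGraph V) (c : Sym2 V → α) (hrep : IsRainbowRepresentative G H c)
    (A B : Set V) (hA : A.ncard = 2 * k - 3) (hB : B.ncard = 3) (hAB : Disjoint A B)
    (hH : ∀ u v : V, H.Adj u v ↔
      (u ∈ A ∧ v ∈ A ∧ u ≠ v) ∨ (u ∈ B ∧ v ∈ B ∧ u ≠ v)) :
    HasRainbowMatching G c k := by
  classical
  have hAfin : A.Finite := A.toFinite
  have hBfin : B.Finite := B.toFinite
  -- an isolated vertex x exists
  obtain ⟨x, hxA, hxB⟩ : ∃ x, x ∉ A ∧ x ∉ B := by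
    by_contra hcon
    push_neg at hcon
    have huniv : A ∪ B = Set.univ := Set.eq_univ_iff_forall.mpr (fun v => by
      by_cases hv : v ∈ A
      · exact Or.inl hv
      · exact Or.inr (hcon v hv))
    have hcard : (A ∪ B).ncard = 2 * k := by
      rw [Set.ncard_union_eq hAB hAfin hBfin, hA, hB]; omega
    rw [huniv, Set.ncard_univ, Nat.card_eq_fintype_card, hV] at hcard
    omega
  have hAne : ∀ {a : V}, a ∈ A → ∀ {b : V}, b ∈ B → a ≠ b := by
    intro a haA b hbB h
    exact (Set.disjoint_left.mp hAB haA) (h ▸ hbB)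
  have hxa : ∀ {a : V}, a ∈ A → x ≠ a := fun h hc => hxA (hc ▸ h)
  have hxb : ∀ {b : V}, b ∈ B → x ≠ b := fun h hc => hxB (hc ▸ h)
  have HEA : ∀ {u w : V}, u ∈ A → w ∈ A → u ≠ w → s(u,w) ∈ H.edgeSet :=
    fun hu hw huw => (SimpleGraph.mem_edgeSet H).mpr ((hH _ _).mpr (Or.inl ⟨hu, hw, huw⟩))
  have HEB : ∀ {u w : V}, u ∈ B → w ∈ B → u ≠ w → s(u,w) ∈ H.edgeSet :=
    fun hu hw huw => (SimpleGraph.mem_edgeSet H).mpr ((hH _ _).mpr (Or.inr ⟨hu, hw, huw⟩))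
  obtain ⟨b1, b2, b3, hb12, hb13, hb23, hBeq⟩ := Set.ncard_eq_three.mp hB
  have hb1 : b1 ∈ B := by rw [hBeq]; exact Set.mem_insert _ _
  have hb2 : b2 ∈ B := by rw [hBeq]; exact Set.mem_insert_iff.mpr (Or.inr (Set.mem_insert _ _))
  have hb3 : b3 ∈ B := by rw [hBeq]; right; right; rfl
  rcases Nat.eq_or_lt_of_le hk with hk3 | hk4
  · -- k = 3
    subst hk3
    have hA3 : A.ncard = 3 := by omega
    obtain ⟨a1, a2, a3, ha12, ha13, ha23, hAeq⟩ := Set.ncard_eq_three.mp hA3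
    have ha1 : a1 ∈ A := by rw [hAeq]; exact Set.mem_insert _ _
    have ha2 : a2 ∈ A := by rw [hAeq]; exact Set.mem_insert_iff.mpr (Or.inr (Set.mem_insert _ _))
    have ha3 : a3 ∈ A := by rw [hAeq]; right; right; rfl
    -- mirror-or facts for the six edges at x
    rcases rm_mirOr hrep x a1 s(a2,a3) s(b1,b2) s(b1,b3)
      (HEA ha2 ha3 ha23) (HEB hb1 hb2 hb12) (HEB hb1 hb3 hb13)
      (rm_pair_ne_left hb23 hb13)
      (rm_disj_pair (hxa ha2) (hxa ha3) ha12 ha13)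
      (rm_disj_pair (hxb hb1) (hxb hb2) (hAne ha1 hb1) (hAne ha1 hb2))
      (rm_disj_pair (hxb hb1) (hxb hb3) (hAne ha1 hb1) (hAne ha1 hb3))
      (rm_disj_pair (hAne ha2 hb1) (hAne ha2 hb2) (hAne ha3 hb1) (hAne ha3 hb2))
      (rm_disj_pair (hAne ha2 hb1) (hAne ha2 hb3) (hAne ha3 hb1) (hAne ha3 hb3))
      with done | m_a1
    · exact done
    rcases rm_mirOr hrep x a2 s(a1,a3) s(b1,b2) s(b1,b3)
      (HEA ha1 ha3 ha13) (HEB hb1 hb2 hb12) (HEB hb1 hb3 hb13)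
      (rm_pair_ne_left hb23 hb13)
      (rm_disj_pair (hxa ha1) (hxa ha3) ha12.symm ha23)
      (rm_disj_pair (hxb hb1) (hxb hb2) (hAne ha2 hb1) (hAne ha2 hb2))
      (rm_disj_pair (hxb hb1) (hxb hb3) (hAne ha2 hb1) (hAne ha2 hb3))
      (rm_disj_pair (hAne ha1 hb1) (hAne ha1 hb2) (hAne ha3 hb1) (hAne ha3 hb2))
      (rm_disj_pair (hAne ha1 hb1) (hAne ha1 hb3) (hAne ha3 hb1) (hAne ha3 hb3))
      with done | m_a2
    · exact done
    rcases rm_mirOr hrep x a3 s(a1,a2) s(b1,b2) s(b1,b3)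
      (HEA ha1 ha2 ha12) (HEB hb1 hb2 hb12) (HEB hb1 hb3 hb13)
      (rm_pair_ne_left hb23 hb13)
      (rm_disj_pair (hxa ha1) (hxa ha2) ha13.symm ha23.symm)
      (rm_disj_pair (hxb hb1) (hxb hb2) (hAne ha3 hb1) (hAne ha3 hb2))
      (rm_disj_pair (hxb hb1) (hxb hb3) (hAne ha3 hb1) (hAne ha3 hb3))
      (rm_disj_pair (hAne ha1 hb1) (hAne ha1 hb2) (hAne ha2 hb1) (hAne ha2 hb2))
      (rm_disj_pair (hAne ha1 hb1) (hAne ha1 hb3) (hAne ha2 hb1) (hAne ha2 hb3))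
      with done | m_a3
    · exact done
    rcases rm_mirOr hrep x b1 s(b2,b3) s(a1,a2) s(a1,a3)
      (HEB hb2 hb3 hb23) (HEA ha1 ha2 ha12) (HEA ha1 ha3 ha13)
      (rm_pair_ne_left ha23 ha13)
      (rm_disj_pair (hxb hb2) (hxb hb3) hb12 hb13)
      (rm_disj_pair (hxa ha1) (hxa ha2) (hAne ha1 hb1).symm (hAne ha2 hb1).symm)
      (rm_disj_pair (hxa ha1) (hxa ha3) (hAne ha1 hb1).symm (hAne ha3 hb1).symm)
      (rm_disj_pair (hAne ha1 hb2).symm (hAne ha2 hb2).symm (hAne ha1 hb3).symm (hAne ha2 hb3).symm)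
      (rm_disj_pair (hAne ha1 hb2).symm (hAne ha3 hb2).symm (hAne ha1 hb3).symm (hAne ha3 hb3).symm)
      with done | m_b1
    · exact done
    rcases rm_mirOr hrep x b2 s(b1,b3) s(a1,a2) s(a1,a3)
      (HEB hb1 hb3 hb13) (HEA ha1 ha2 ha12) (HEA ha1 ha3 ha13)
      (rm_pair_ne_left ha23 ha13)
      (rm_disj_pair (hxb hb1) (hxb hb3) hb12.symm hb23)
      (rm_disj_pair (hxa ha1) (hxa ha2) (hAne ha1 hb2).symm (hAne ha2 hb2).symm)
      (rm_disj_pair (hxa ha1) (hxa ha3) (hAne ha1 hb2).symm (hAne ha3 hb2).symm)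
      (rm_disj_pair (hAne ha1 hb1).symm (hAne ha2 hb1).symm (hAne ha1 hb3).symm (hAne ha2 hb3).symm)
      (rm_disj_pair (hAne ha1 hb1).symm (hAne ha3 hb1).symm (hAne ha1 hb3).symm (hAne ha3 hb3).symm)
      with done | m_b2
    · exact done
    rcases rm_mirOr hrep x b3 s(b1,b2) s(a1,a2) s(a1,a3)
      (HEB hb1 hb2 hb12) (HEA ha1 ha2 ha12) (HEA ha1 ha3 ha13)
      (rm_pair_ne_left ha23 ha13)
      (rm_disj_pair (hxb hb1) (hxb hb2) hb13.symm hb23.symm)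
      (rm_disj_pair (hxa ha1) (hxa ha2) (hAne ha1 hb3).symm (hAne ha2 hb3).symm)
      (rm_disj_pair (hxa ha1) (hxa ha3) (hAne ha1 hb3).symm (hAne ha3 hb3).symm)
      (rm_disj_pair (hAne ha1 hb1).symm (hAne ha2 hb1).symm (hAne ha1 hb2).symm (hAne ha2 hb2).symm)
      (rm_disj_pair (hAne ha1 hb1).symm (hAne ha3 hb1).symm (hAne ha1 hb2).symm (hAne ha3 hb2).symm)
      with done | m_b3
    · exact done
    -- presence case analysis: at most one of the relevant edges is missing
    by_cases q1 : s(x,a1) ∈ G.edgeSet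
    · by_cases q2 : s(x,a2) ∈ G.edgeSet
      · by_cases q3 : s(x,a3) ∈ G.edgeSet
        · by_cases q4 : s(x,b1) ∈ G.edgeSet
          · by_cases q5 : s(x,b2) ∈ G.edgeSet
            · by_cases q6 : s(x,b3) ∈ G.edgeSet
              · by_cases qc : s(a1,b1) ∈ G.edgeSet
                · exact rm_S4core hrep A B hH hAB x a1 a2 a3 b1 b2 b3 hxA hxB
                    ha1 ha2 ha3 hb1 hb2 hb3 ha12 ha13 ha23 hb12 hb13 hb23
                    qc q2 q3 q5 (m_a2 q2) (m_a3 q3) (m_b2 q5)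
                · have hcross2 : s(a1,b2) ∈ G.edgeSet :=
                    rm_one_missing G hG (hAne ha1 hb1) (hAne ha1 hb2)
                      (rm_pair_ne_left hb12 (hAne ha1 hb2)) qc
                  exact rm_S4core hrep A B hH hAB x a1 a2 a3 b2 b1 b3 hxA hxB
                    ha1 ha2 ha3 hb2 hb1 hb3 ha12 ha13 ha23 hb12.symm hb23 hb13
                    hcross2 q2 q3 q4 (m_a2 q2) (m_a3 q3) (m_b1 q4)
              · have hOM : ∀ (u w : V), u ≠ w → s(x,b3) ≠ s(u,w) → s(u,w) ∈ G.edgeSet :=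
                  fun u w h hne => rm_one_missing G hG (hxb hb3) h hne q6
                exact rm_S4core hrep A B hH hAB x a1 a2 a3 b1 b2 b3 hxA hxB
                  ha1 ha2 ha3 hb1 hb2 hb3 ha12 ha13 ha23 hb12 hb13 hb23
                  (hOM a1 b1 (hAne ha1 hb1) (rm_pair_ne (hxa ha1) (hxb hb1)))
                  q2 q3 q5 (m_a2 q2) (m_a3 q3) (m_b2 q5)
            · have hOM : ∀ (u w : V), u ≠ w → s(x,b2) ≠ s(u,w) → s(u,w) ∈ G.edgeSet :=
                fun u w h hne => rm_one_missing G hG (hxb hb2) h hne q5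
              have hxb3' : s(x,b3) ∈ G.edgeSet :=
                hOM x b3 (hxb hb3) (rm_pair_ne_left hb23 (hxb hb3))
              exact rm_S4core hrep A B hH hAB x a1 a2 a3 b1 b3 b2 hxA hxB
                ha1 ha2 ha3 hb1 hb3 hb2 ha12 ha13 ha23 hb13 hb12 hb23.symm
                (hOM a1 b1 (hAne ha1 hb1) (rm_pair_ne (hxa ha1) (hxb hb1)))
                q2 q3 hxb3' (m_a2 q2) (m_a3 q3) (m_b3 hxb3')
          · have hOM : ∀ (u w : V), u ≠ w → s(x,b1) ≠ s(u,w) → s(u,w) ∈ G.edgeSet :=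
              fun u w h hne => rm_one_missing G hG (hxb hb1) h hne q4
            have hxb2' : s(x,b2) ∈ G.edgeSet :=
              hOM x b2 (hxb hb2) (rm_pair_ne_left hb12 (hxb hb2))
            exact rm_S4core hrep A B hH hAB x a1 a2 a3 b1 b2 b3 hxA hxB
              ha1 ha2 ha3 hb1 hb2 hb3 ha12 ha13 ha23 hb12 hb13 hb23
              (hOM a1 b1 (hAne ha1 hb1) (rm_pair_ne (hxa ha1) (hxb hb1)))
              q2 q3 hxb2' (m_a2 q2) (m_a3 q3) (m_b2 hxb2')
        · have hOM : ∀ (u w : V), u ≠ w → s(x,a3) ≠ s(u,w) → s(u,w) ∈ G.edgeSet :=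
            fun u w h hne => rm_one_missing G hG (hxa ha3) h hne q3
          have hxb2' : s(x,b2) ∈ G.edgeSet :=
            hOM x b2 (hxb hb2) (rm_pair_ne_left (hAne ha3 hb2) (hxb hb2))
          exact rm_S4core hrep A B hH hAB x a3 a1 a2 b1 b2 b3 hxA hxB
            ha3 ha1 ha2 hb1 hb2 hb3 ha13.symm ha23.symm ha12 hb12 hb13 hb23
            (hOM a3 b1 (hAne ha3 hb1) (rm_pair_ne (hxa ha3) (hxb hb1)))
            q1 q2 hxb2'
            ((m_a1 q1).trans (congrArg c Sym2.eq_swap))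
            ((m_a2 q2).trans (congrArg c Sym2.eq_swap))
            (m_b2 hxb2')
      · have hOM : ∀ (u w : V), u ≠ w → s(x,a2) ≠ s(u,w) → s(u,w) ∈ G.edgeSet :=
          fun u w h hne => rm_one_missing G hG (hxa ha2) h hne q2
        have hxa3' : s(x,a3) ∈ G.edgeSet :=
          hOM x a3 (hxa ha3) (rm_pair_ne_left ha23 (hxa ha3))
        have hxb2' : s(x,b2) ∈ G.edgeSet :=
          hOM x b2 (hxb hb2) (rm_pair_ne_left (hAne ha2 hb2) (hxb hb2))
        exact rm_S4core hrep A B hH hAB x a2 a1 a3 b1 b2 b3 hxA hxB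
          ha2 ha1 ha3 hb1 hb2 hb3 ha12.symm ha23 ha13 hb12 hb13 hb23
          (hOM a2 b1 (hAne ha2 hb1) (rm_pair_ne (hxa ha2) (hxb hb1)))
          q1 hxa3' hxb2'
          (m_a1 q1)
          ((m_a3 hxa3').trans (congrArg c Sym2.eq_swap))
          (m_b2 hxb2')
    · have hOM : ∀ (u w : V), u ≠ w → s(x,a1) ≠ s(u,w) → s(u,w) ∈ G.edgeSet :=
        fun u w h hne => rm_one_missing G hG (hxa ha1) h hne q1
      have hxa2' : s(x,a2) ∈ G.edgeSet :=
        hOM x a2 (hxa ha2) (rm_pair_ne_left ha12 (hxa ha2))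
      have hxa3' : s(x,a3) ∈ G.edgeSet :=
        hOM x a3 (hxa ha3) (rm_pair_ne_left ha13 (hxa ha3))
      have hxb2' : s(x,b2) ∈ G.edgeSet :=
        hOM x b2 (hxb hb2) (rm_pair_ne_left (hAne ha1 hb2) (hxb hb2))
      exact rm_S4core hrep A B hH hAB x a1 a2 a3 b1 b2 b3 hxA hxB
        ha1 ha2 ha3 hb1 hb2 hb3 ha12 ha13 ha23 hb12 hb13 hb23
        (hOM a1 b1 (hAne ha1 hb1) (rm_pair_ne (hxa ha1) (hxb hb1)))
        hxa2' hxa3' hxb2' (m_a2 hxa2') (m_a3 hxa3') (m_b2 hxb2')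
  · -- k ≥ 4
    have hk4' : 4 ≤ k := hk4
    set A' := hAfin.toFinset with hA'def
    have hmemA' : ∀ {a : V}, a ∈ A' ↔ a ∈ A := fun {a} => Set.Finite.mem_toFinset hAfin
    have hA'card : A'.card = 2 * k - 3 := by
      rw [← Set.ncard_eq_toFinset_card A hAfin, hA]
    -- the main construction, given a ∈ A with x~a in G
    have key : ∀ a : V, a ∈ A → s(x,a) ∈ G.edgeSet → HasRainbowMatching G c k := by
      intro a haA he
      obtain ⟨f, hfH, hcf⟩ := hrep.2.2 _ he
      obtain ⟨p, q, hp, hq, hpq, hgf⟩ :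
          ∃ p q : V, p ∈ B ∧ q ∈ B ∧ p ≠ q ∧ s(p,q) ≠ f := by
        by_cases h12 : s(b1,b2) = f
        · exact ⟨b1, b3, hb1, hb3, hb13, by
            intro hcon; rw [← h12] at hcon
            exact (rm_pair_ne_left hb23.symm hb12 : s(b1,b3) ≠ s(b1,b2)) hcon⟩
        · exact ⟨b1, b2, hb1, hb2, hb12, h12⟩
      have haA' : a ∈ A' := hmemA'.mpr haA
      have hScard : 2 * (k - 2) ≤ (A'.erase a).card := by
        rw [Finset.card_erase_of_mem haA', hA'card]; omega
      obtain ⟨P, hP, hPf⟩ := rm_pairs_avoid2 (k-2) (A'.erase a) f (by omega) hScard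
      have hPA : ∀ {z : Sym2 V}, z ∈ P → ∀ {v : V}, v ∈ z → v ∈ A ∧ v ≠ a := by
        intro z hz v hv
        have := hP.vmem hz hv
        rw [Finset.mem_erase] at this
        exact ⟨hmemA'.mp this.2, this.1⟩
      have hgP : s(p,q) ∉ P := by
        intro hmem
        exact hAne (hPA hmem (Sym2.mem_mk_left p q)).1 hp rfl
      refine rm_one_extra hrep s(x,a) f (insert s(p,q) P) he hfH hcf ?_ ?_ ?_ ?_ ?_
      · intro z hz
        rcases Finset.mem_insert.mp hz with heq | hz
        · rw [heq]; exact HEB hp hq hpq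
        · obtain ⟨u, w, hu, hw, huw, rfl⟩ := hP.2.1 z hz
          rw [Finset.mem_erase] at hu hw
          exact HEA (hmemA'.mp hu.2) (hmemA'.mp hw.2) huw
      · intro z hz
        rcases Finset.mem_insert.mp hz with heq | hz
        · rw [heq]; exact hgf
        · exact hPf z hz
      · intro z hz v hv
        rcases Finset.mem_insert.mp hz with heq | hz
        · rw [heq]
          exact rm_disj_pair (hxb hp) (hxb hq) (hAne haA hp) (hAne haA hq) v hv
        · obtain ⟨u, w, hu, hw, huw, rfl⟩ := hP.2.1 z hz
          have hu' := hPA hz (Sym2.mem_mk_left u w)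
          have hw' := hPA hz (Sym2.mem_mk_right u w)
          exact rm_disj_pair (hxa hu'.1) (hxa hw'.1) hu'.2.symm hw'.2.symm v hv
      · intro z hz z' hz' hne v hv hv'
        rcases Finset.mem_insert.mp hz with heq | hz <;>
          rcases Finset.mem_insert.mp hz' with heq' | hz'
        · exact hne (heq.trans heq'.symm)
        · obtain ⟨u, w, hu, hw, huw, rfl⟩ := hP.2.1 z' hz'
          have hu' := hPA hz' (Sym2.mem_mk_left u w)
          have hw' := hPA hz' (Sym2.mem_mk_right u w)
          exact rm_disj_pair (hAne hu'.1 hp).symm (hAne hw'.1 hp).symm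
            (hAne hu'.1 hq).symm (hAne hw'.1 hq).symm v (heq ▸ hv) hv'
        · obtain ⟨u, w, hu, hw, huw, rfl⟩ := hP.2.1 z hz
          have hu' := hPA hz (Sym2.mem_mk_left u w)
          have hw' := hPA hz (Sym2.mem_mk_right u w)
          exact rm_disj_pair (hAne hu'.1 hp) (hAne hu'.1 hq)
            (hAne hw'.1 hp) (hAne hw'.1 hq) v hv (heq' ▸ hv')
        · exact hP.2.2 z hz z' hz' hne v hv hv'
      · rw [Finset.card_insert_of_notMem hgP, hP.1]; omega
    -- find a ∈ A with x~a present
    have h1lt : 1 < A'.card := by rw [hA'card]; omega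
    obtain ⟨u, hu, w, hw, huw⟩ := Finset.one_lt_card.mp h1lt
    have huA := hmemA'.mp hu
    have hwA := hmemA'.mp hw
    by_cases hpu : s(x,u) ∈ G.edgeSet
    · exact key u huA hpu
    · exact key w hwA (rm_one_missing G hG (hxa huA) (hxa hwA)
        (rm_pair_ne_left huw (hxa hwA)) hpu)
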